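/- arXiv:1709.08427 — 3 statements merged into one kernel-verified Lean document; each statement's English description precedes it below -/
import Mathlib

section
/- Let σ ∈ S_m be an indecomposable 321-avoiding permutation with m > 1, let π ∈ S_n be 321-avoiding, and let 1 ≤ k_1 < … < k_m ≤ n. Then (k_1, …, k_m) is an occurrence of σ in π if and only if: (i) k_i is an exceedance of π whenever i is an exceedance of σ; (ii) π(k_i) ≤ k_i whenever σ(i) ≤ i; and (iii) for all i < j with σ(i) > i and σ(j) ≤ j, one has π(k_i) > π(k_j) if and only if σ(i) > σ(j). -/
/-- The composition (direct sum) `σ * τ` of two permutations of finite intervals. -/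
def permComp : (Σ n : ℕ, Equiv.Perm (Fin n)) → (Σ n : ℕ, Equiv.Perm (Fin n)) →
    (Σ n : ℕ, Equiv.Perm (Fin n))
  | ⟨m, σ⟩, ⟨n, τ⟩ => ⟨m + n, finSumFinEquiv.permCongr (Equiv.Perm.sumCongr σ τ)⟩

/-- A permutation (of positive length) is decomposable if it is a composition of two
permutations of positive lengths. -/
def Decomposable (p : Σ n : ℕ, Equiv.Perm (Fin n)) : Prop :=
  ∃ q r : Σ n : ℕ, Equiv.Perm (Fin n), 1 ≤ q.1 ∧ 1 ≤ r.1 ∧ p = permComp q r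

/-- A permutation of positive length is indecomposable (a block) if it is not decomposable. -/
def Indecomposable (p : Σ n : ℕ, Equiv.Perm (Fin n)) : Prop :=
  1 ≤ p.1 ∧ ¬ Decomposable p

/-- `π` avoids the pattern 321. -/
def Avoids321 {n : ℕ} (π : Equiv.Perm (Fin n)) : Prop :=
  ¬ ∃ i j k : Fin n, i < j ∧ j < k ∧ π k < π j ∧ π j < π i

/-- In a 321-avoiding permutation, if `q` is an exceedance then every earlier value is
smaller. -/
lemma avoid_exc {n : ℕ} {π : Equiv.Perm (Fin n)} (hπ : Avoids321 π)
    {p q : Fin n} (hpq : p < q) (hq : q < π q) : π p < π q := by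
  by_contra hcon
  push_neg at hcon
  have hne : π q ≠ π p := fun he => absurd (π.injective he) (ne_of_lt hpq).symm
  have hlt : π q < π p := lt_of_le_of_ne hcon hne
  have hex : ∃ r, q < r ∧ π r ≤ q := by
    by_contra hr
    push_neg at hr
    have hsub : (Finset.Ioi q).image π ⊆ Finset.Ioi q := by
      intro y hy
      simp only [Finset.mem_image, Finset.mem_Ioi] at *
      obtain ⟨x, hx, rfl⟩ := hy
      exact hr x hx
    have heq : (Finset.Ioi q).image π = Finset.Ioi q :=
      Finset.eq_of_subset_of_card_le hsub
        (by rw [Finset.card_image_of_injective _ π.injective])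
    have hq' : π q ∈ Finset.Ioi q := Finset.mem_Ioi.mpr hq
    rw [← heq] at hq'
    obtain ⟨r, hr1, hr2⟩ := Finset.mem_image.mp hq'
    have : r = q := π.injective hr2
    subst this
    exact lt_irrefl r (Finset.mem_Ioi.mp hr1)
  obtain ⟨r, hr1, hr2⟩ := hex
  exact hπ ⟨p, q, r, hpq, hr1, lt_of_le_of_lt hr2 hq, hlt⟩

/-- In a 321-avoiding permutation, if `p` is a weak deficiency then every later value is
larger. -/
lemma avoid_def {n : ℕ} {π : Equiv.Perm (Fin n)} (hπ : Avoids321 π)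
    {p q : Fin n} (hpq : p < q) (hp : π p ≤ p) : π p < π q := by
  by_contra hcon
  push_neg at hcon
  have hne : π q ≠ π p := fun he => absurd (π.injective he) (ne_of_lt hpq).symm
  have hlt : π q < π p := lt_of_le_of_ne hcon hne
  have hex : ∃ s, s < p ∧ p ≤ π s := by
    by_contra hs
    push_neg at hs
    have hsub : (Finset.Iio p).image π ⊆ Finset.Iio p := by
      intro y hy
      simp only [Finset.mem_image, Finset.mem_Iio] at *
      obtain ⟨x, hx, rfl⟩ := hy
      exact hs x hx
    have heq : (Finset.Iio p).image π = Finset.Iio p :=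
      Finset.eq_of_subset_of_card_le hsub
        (by rw [Finset.card_image_of_injective _ π.injective])
    have hq' : π q ∈ Finset.Iio p := Finset.mem_Iio.mpr (lt_of_lt_of_le hlt hp)
    rw [← heq] at hq'
    obtain ⟨s, hs1, hs2⟩ := Finset.mem_image.mp hq'
    have : s = q := π.injective hs2
    subst this
    exact absurd (lt_trans (Finset.mem_Iio.mp hs1) hpq) (lt_irrefl _)
  obtain ⟨s, hs1, hs2⟩ := hex
  have hsp : π p < π s := by
    have hne2 : π s ≠ π p := fun he => absurd (π.injective he) (ne_of_lt hs1)
    exact lt_of_le_of_ne (le_trans hp hs2) hne2.symm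
  exact hπ ⟨s, p, q, hs1, hpq, hlt, hsp⟩

/-- Every exceedance is the top of an inversion. -/
lemma exists_inv_right {m : ℕ} (σ : Equiv.Perm (Fin m)) {i : Fin m} (hi : i < σ i) :
    ∃ j, i < j ∧ σ j < σ i := by
  by_contra h
  push_neg at h
  have hsub : (Finset.Ici i).image σ ⊆ Finset.Ici (σ i) := by
    intro y hy
    simp only [Finset.mem_image, Finset.mem_Ici] at *
    obtain ⟨x, hx, rfl⟩ := hy
    rcases eq_or_lt_of_le hx with rfl | h'
    · exact le_refl _
    · exact h x h'
  have hcard := Finset.card_le_card hsub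
  rw [Finset.card_image_of_injective _ σ.injective, Fin.card_Ici, Fin.card_Ici] at hcard
  have h1 : (i : ℕ) < (σ i : ℕ) := hi
  have h2 : (σ i : ℕ) < m := (σ i).isLt
  omega

/-- Every strict deficiency is the bottom of an inversion. -/
lemma exists_inv_left {m : ℕ} (σ : Equiv.Perm (Fin m)) {j : Fin m} (hj : σ j < j) :
    ∃ i, i < j ∧ σ j < σ i := by
  by_contra h
  push_neg at h
  have hsub : (Finset.Iic j).image σ ⊆ Finset.Iic (σ j) := by
    intro y hy
    simp only [Finset.mem_image, Finset.mem_Iic] at *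
    obtain ⟨x, hx, rfl⟩ := hy
    rcases eq_or_lt_of_le hx with rfl | h'
    · exact le_refl _
    · exact h x h'
  have hcard := Finset.card_le_card hsub
  rw [Finset.card_image_of_injective _ σ.injective, Fin.card_Iic, Fin.card_Iic] at hcard
  have h1 : (σ j : ℕ) < (j : ℕ) := hj
  omega

/-- If a permutation of `Fin (j+l)` maps the first `j` elements into themselves, it is
decomposable. -/
lemma dec_of_invariant {j l : ℕ} (hj : 1 ≤ j) (hl : 1 ≤ l) (σ : Equiv.Perm (Fin (j + l)))
    (h : ∀ x : Fin (j + l), (x : ℕ) < j → ((σ x : ℕ)) < j) :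
    Decomposable ⟨j + l, σ⟩ := by
  have hsymm : ∀ x : Fin (j + l), (x : ℕ) < j → ((σ.symm x : ℕ)) < j := by
    intro x hx
    set A : Finset (Fin (j + l)) := Finset.univ.filter (fun y => (y : ℕ) < j) with hA
    have hsub : A.image σ ⊆ A := by
      intro y hy
      simp only [hA, Finset.mem_image, Finset.mem_filter, Finset.mem_univ, true_and] at *
      obtain ⟨z, hz, rfl⟩ := hy
      exact h z hz
    have heq : A.image σ = A :=
      Finset.eq_of_subset_of_card_le hsub
        (by rw [Finset.card_image_of_injective _ σ.injective])
    have hxA : x ∈ A := by simp [hA, hx]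
    rw [← heq] at hxA
    obtain ⟨z, hz1, hz2⟩ := Finset.mem_image.mp hxA
    have : σ.symm x = z := by rw [← hz2]; exact σ.symm_apply_apply z
    rw [this]
    simpa [hA] using hz1
  have hge : ∀ x : Fin (j + l), j ≤ (x : ℕ) → j ≤ ((σ x : ℕ)) := by
    intro x hx
    by_contra hc
    push_neg at hc
    have := hsymm (σ x) hc
    rw [σ.symm_apply_apply] at this
    omega
  have hgesymm : ∀ x : Fin (j + l), j ≤ (x : ℕ) → j ≤ ((σ.symm x : ℕ)) := by
    intro x hx
    by_contra hc
    push_neg at hc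
    have := h (σ.symm x) hc
    rw [σ.apply_symm_apply] at this
    omega
  have hcast : ∀ x : Fin j, ((Fin.castAdd l x : Fin (j + l)) : ℕ) < j := fun x => x.isLt
  refine ⟨⟨j, ?σ1⟩, ⟨l, ?σ2⟩, ?_, ?_, ?_⟩
  case σ1 => exact
    { toFun := fun x => ⟨(σ (Fin.castAdd l x) : ℕ), h _ (hcast x)⟩
      invFun := fun x => ⟨(σ.symm (Fin.castAdd l x) : ℕ), hsymm _ (hcast x)⟩
      left_inv := by
        intro x
        apply Fin.ext
        simp only []
        have h1 : (Fin.castAdd l (⟨(σ (Fin.castAdd l x) : ℕ), h _ (hcast x)⟩ : Fin j))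
            = σ (Fin.castAdd l x) := by apply Fin.ext; simp
        rw [h1, σ.symm_apply_apply]
        simp
      right_inv := by
        intro x
        apply Fin.ext
        simp only []
        have h1 : (Fin.castAdd l (⟨(σ.symm (Fin.castAdd l x) : ℕ), hsymm _ (hcast x)⟩ : Fin j))
            = σ.symm (Fin.castAdd l x) := by apply Fin.ext; simp
        rw [h1, σ.apply_symm_apply]
        simp }
  case σ2 =>
    have hnat : ∀ x : Fin l, j ≤ ((Fin.natAdd j x : Fin (j + l)) : ℕ) := by
      intro x; simp
    exact
    { toFun := fun x => ⟨(σ (Fin.natAdd j x) : ℕ) - j, by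
        have h1 := hge _ (hnat x)
        have h2 := (σ (Fin.natAdd j x)).isLt
        omega⟩
      invFun := fun x => ⟨(σ.symm (Fin.natAdd j x) : ℕ) - j, by
        have h1 := hgesymm _ (hnat x)
        have h2 := (σ.symm (Fin.natAdd j x)).isLt
        omega⟩
      left_inv := by
        intro x
        apply Fin.ext
        simp only []
        have h1 : (Fin.natAdd j (⟨(σ (Fin.natAdd j x) : ℕ) - j, by
              have h1 := hge _ (hnat x)
              have h2 := (σ (Fin.natAdd j x)).isLt
              omega⟩ : Fin l)) = σ (Fin.natAdd j x) := by
          apply Fin.ext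
          have := hge _ (hnat x)
          simp only [Fin.coe_natAdd]
          omega
        rw [h1, σ.symm_apply_apply]
        simp
      right_inv := by
        intro x
        apply Fin.ext
        simp only []
        have h1 : (Fin.natAdd j (⟨(σ.symm (Fin.natAdd j x) : ℕ) - j, by
              have h1 := hgesymm _ (hnat x)
              have h2 := (σ.symm (Fin.natAdd j x)).isLt
              omega⟩ : Fin l)) = σ.symm (Fin.natAdd j x) := by
          apply Fin.ext
          have := hgesymm _ (hnat x)
          simp only [Fin.coe_natAdd]
          omega
        rw [h1, σ.apply_symm_apply]
        simp }
  · exact hj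
  · exact hl
  · show (⟨j + l, σ⟩ : Σ n : ℕ, Equiv.Perm (Fin n)) = ⟨j + l, _⟩
    congr 1
    apply Equiv.ext
    intro x
    rw [Equiv.permCongr_apply]
    by_cases hx : (x : ℕ) < j
    · have hxy : Fin.castAdd l (⟨(x : ℕ), hx⟩ : Fin j) = x := Fin.ext (by simp)
      rw [← hxy, finSumFinEquiv_symm_apply_castAdd]
      simp only [Equiv.Perm.sumCongr_apply, Sum.map_inl, finSumFinEquiv_apply_left,
        Equiv.coe_fn_mk]
      apply Fin.ext
      simp
    · push_neg at hx
      have hxy : Fin.natAdd j (⟨(x : ℕ) - j, by have := x.isLt; omega⟩ : Fin l) = x :=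
        Fin.ext (by simp only [Fin.coe_natAdd]; omega)
      rw [← hxy, finSumFinEquiv_symm_apply_natAdd]
      simp only [Equiv.Perm.sumCongr_apply, Sum.map_inr, finSumFinEquiv_apply_right,
        Equiv.coe_fn_mk]
      apply Fin.ext
      simp only [Fin.coe_natAdd]
      have hgx : j ≤ (σ (Fin.natAdd j (⟨(x : ℕ) - j, by have := x.isLt; omega⟩ : Fin l)) : ℕ) :=
        hge _ (by simp)
      omega

lemma sigma_cast {a b : ℕ} (h : a = b) (σ : Equiv.Perm (Fin a)) :
    (⟨a, σ⟩ : Σ n : ℕ, Equiv.Perm (Fin n)) = ⟨b, (finCongr h).permCongr σ⟩ := by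
  subst h
  rfl

/-- From indecomposability: every proper prefix is crossed by some value. -/
lemma exists_ge_of_indec {m : ℕ} (σ : Equiv.Perm (Fin m)) (hind : Indecomposable ⟨m, σ⟩)
    {d : ℕ} (hd1 : 1 ≤ d) (hdm : d < m) : ∃ i : Fin m, (i : ℕ) < d ∧ d ≤ (σ i : ℕ) := by
  by_contra h
  push_neg at h
  apply hind.2
  have hm : m = d + (m - d) := by omega
  rw [sigma_cast hm σ]
  apply dec_of_invariant hd1 (by omega)
  intro x hx
  rw [Equiv.permCongr_apply]
  simp only [finCongr_apply, Fin.coe_cast]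
  apply h
  simpa using hx

theorem occurrence_characterization (m n : ℕ) (hm : 1 < m)
    (σ : Equiv.Perm (Fin m)) (hσ : Avoids321 σ) (hind : Indecomposable ⟨m, σ⟩)
    (π : Equiv.Perm (Fin n)) (hπ : Avoids321 π)
    (k : Fin m → Fin n) (hk : StrictMono k) :
    (∀ i j : Fin m, π (k i) < π (k j) ↔ σ i < σ j) ↔
      ((∀ i : Fin m, i < σ i → k i < π (k i)) ∧
       (∀ i : Fin m, σ i ≤ i → π (k i) ≤ k i) ∧
       (∀ i j : Fin m, i < j → i < σ i → σ j ≤ j →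
         (π (k j) < π (k i) ↔ σ j < σ i))) := by
  constructor
  · intro H
    refine ⟨?_, ?_, ?_⟩
    · intro i hi
      obtain ⟨j, hij, hji⟩ := exists_inv_right σ hi
      have h1 : π (k j) < π (k i) := (H j i).mpr hji
      by_contra hc
      push_neg at hc
      exact absurd (avoid_def hπ (hk hij) hc) (asymm h1)
    · intro i hle
      have hex : ∃ x, x < i ∧ σ i < σ x := by
        rcases lt_or_eq_of_le hle with hlt | heq
        · exact exists_inv_left σ hlt
        · by_cases hi0 : (i : ℕ) = 0
          · exfalso
            obtain ⟨x, hx1, hx2⟩ := exists_ge_of_indec σ hind (le_refl 1) hm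
            have hxi : x = i := Fin.ext (by omega)
            rw [hxi] at hx2
            have hv : (σ i : ℕ) = (i : ℕ) := by rw [heq]
            omega
          · obtain ⟨x, hx1, hx2⟩ := exists_ge_of_indec σ hind
              (by omega : 1 ≤ (i : ℕ)) i.isLt
            refine ⟨x, hx1, ?_⟩
            have hne : σ x ≠ σ i := fun he => by
              have : x = i := σ.injective he
              rw [this] at hx1; exact absurd hx1 (lt_irrefl _)
            have : (σ i : ℕ) < (σ x : ℕ) := by
              have hσi : (σ i : ℕ) = (i : ℕ) := by rw [heq]
              have : (σ x : ℕ) ≠ (i : ℕ) := fun he => hne (Fin.ext (by omega))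
              omega
            exact this
      obtain ⟨x, hxi, hgt⟩ := hex
      have h1 : π (k i) < π (k x) := (H i x).mpr hgt
      by_contra hc
      push_neg at hc
      exact absurd (avoid_exc hπ (hk hxi) hc) (asymm h1)
    · intro i j _ _ _
      exact H j i
  · rintro ⟨hA, hB, hC⟩
    have key : ∀ i j : Fin m, σ i < σ j → π (k i) < π (k j) := by
      intro i j hσij
      rcases lt_trichotomy i j with hij | rfl | hji
      · rcases lt_or_ge j (σ j) with hje | hjd
        · exact avoid_exc hπ (hk hij) (hA j hje)
        · rcases lt_or_ge i (σ i) with hie | hid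
          · have hiff := hC i j hij hie hjd
            have h3 : ¬ π (k j) < π (k i) := fun hh => asymm hσij (hiff.mp hh)
            have hne : π (k i) ≠ π (k j) := fun he =>
              absurd (π.injective he) (ne_of_lt (hk hij))
            exact lt_of_le_of_ne (le_of_not_gt h3) hne
          · exact avoid_def hπ (hk hij) (hB i hid)
      · exact absurd hσij (lt_irrefl _)
      · have hje : j < σ j := by
          by_contra hc
          push_neg at hc
          exact absurd (avoid_def hσ hji hc) (asymm hσij)
        have hid : σ i ≤ i := by
          by_contra hc
          push_neg at hc
          exact absurd (avoid_exc hσ hji hc) (asymm hσij)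
        exact (hC j i hji hje hid).mpr hσij
    intro i j
    constructor
    · intro hππ
      rcases lt_trichotomy (σ i) (σ j) with h | h | h
      · exact h
      · exact absurd hππ (by rw [σ.injective h]; exact lt_irrefl _)
      · exact absurd (key j i h) (asymm hππ)
    · exact key i j
end

section
/- Let σ ∈ S_m be an indecomposable permutation (m ≥ 1), let π ∈ S_n, and let Δ* = max_{1≤i≤n} |π(i) − i|. If (k_1, …, k_m) is an occurrence of σ in π, then 0 < k_i − k_1 ≤ 2 m Δ* for every i = 2, …, m. Consequently, the number of occurrences of σ in π is at most (2m Δ*)^{m−1} · n. -/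
/-- `f` is an occurrence of the pattern `σ ∈ S_m` in `π ∈ S_n`. -/
def IsOcc {m n : ℕ} (σ : Equiv.Perm (Fin m)) (π : Equiv.Perm (Fin n))
    (f : Fin m → Fin n) : Prop :=
  StrictMono f ∧ ∀ j k : Fin m, π (f j) < π (f k) ↔ σ j < σ k

/-- `n_σ(π)`: the number of occurrences of `σ` in `π`. -/
noncomputable def occCount {m n : ℕ} (σ : Equiv.Perm (Fin m))
    (π : Equiv.Perm (Fin n)) : ℕ :=
  Nat.card {f : Fin m → Fin n // IsOcc σ π f}


lemma maps_surj {m t : ℕ} (σ : Equiv.Perm (Fin m))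
    (h : ∀ x : Fin m, (x : ℕ) < t → ((σ x : Fin m) : ℕ) < t) :
    ∀ y : Fin m, (y : ℕ) < t → ∃ x : Fin m, (x : ℕ) < t ∧ σ x = y := by
  classical
  intro y hy
  set S : Finset (Fin m) := Finset.univ.filter (fun x => (x : ℕ) < t) with hS
  have hsub : S.image σ ⊆ S := by
    intro z hz
    simp only [hS, Finset.mem_image, Finset.mem_filter, Finset.mem_univ, true_and] at hz ⊢
    obtain ⟨x, hx, rfl⟩ := hz
    exact h x hx
  have hcard : S.card ≤ (S.image σ).card := by
    rw [Finset.card_image_of_injective _ σ.injective]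
  have heq : S.image σ = S := Finset.eq_of_subset_of_card_le hsub hcard
  have hy' : y ∈ S := by simp [hS, hy]
  rw [← heq] at hy'
  simpa [hS] using (Finset.mem_image.mp hy')

lemma sigma_perm_eq {a b : ℕ} (h : a = b) (σ : Equiv.Perm (Fin a)) (τ : Equiv.Perm (Fin b))
    (hpt : ∀ (i : ℕ) (hi : i < a) (hi' : i < b),
      ((σ ⟨i, hi⟩ : Fin a) : ℕ) = ((τ ⟨i, hi'⟩ : Fin b) : ℕ)) :
    (⟨a, σ⟩ : Σ n, Equiv.Perm (Fin n)) = ⟨b, τ⟩ := by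
  subst h
  congr 1
  exact Equiv.ext fun i => Fin.ext (by simpa using hpt i.1 i.2 i.2)

lemma decomp_of_maps {m t : ℕ} (σ : Equiv.Perm (Fin m)) (h1 : 1 ≤ t) (h2 : t < m)
    (h : ∀ x : Fin m, (x : ℕ) < t → ((σ x : Fin m) : ℕ) < t) : Decomposable ⟨m, σ⟩ := by
  have hup : ∀ x : Fin m, t ≤ (x : ℕ) → t ≤ ((σ x : Fin m) : ℕ) := by
    intro x hx
    by_contra hc
    push_neg at hc
    obtain ⟨z, hz, hzx⟩ := maps_surj σ h (σ x) hc
    have : z = x := σ.injective hzx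
    omega
  -- q : permutation of Fin t
  have hg : Function.Injective (fun x : Fin t => (⟨((σ ⟨x.1, by omega⟩ : Fin m) : ℕ), h _ x.2⟩ : Fin t)) := by
    intro a b hab
    have hv := congrArg Fin.val hab
    simp only at hv
    have hv2 := σ.injective (Fin.val_injective hv)
    rw [Fin.mk.injEq] at hv2
    exact Fin.ext hv2
  have hgr : Function.Injective (fun x : Fin (m - t) =>
      (⟨((σ ⟨x.1 + t, by omega⟩ : Fin m) : ℕ) - t, by
        have ha := hup ⟨x.1 + t, by omega⟩ (Nat.le_add_left t _)
        have hb := (σ (⟨x.1 + t, by omega⟩ : Fin m)).2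
        omega⟩ : Fin (m - t))) := by
    intro a b hab
    have hv := congrArg Fin.val hab
    simp only at hv
    have ha := hup ⟨a.1 + t, by omega⟩ (Nat.le_add_left t _)
    have hb := hup ⟨b.1 + t, by omega⟩ (Nat.le_add_left t _)
    have heq : (σ ⟨a.1 + t, by omega⟩ : Fin m) = σ ⟨b.1 + t, by omega⟩ := Fin.ext (by omega)
    have hv2 := σ.injective heq
    rw [Fin.mk.injEq] at hv2
    exact Fin.ext (by omega)
  let q : Equiv.Perm (Fin t) := Equiv.ofBijective _ (Finite.injective_iff_bijective.mp hg)
  let r : Equiv.Perm (Fin (m - t)) := Equiv.ofBijective _ (Finite.injective_iff_bijective.mp hgr)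
  refine ⟨⟨t, q⟩, ⟨m - t, r⟩, h1, show 1 ≤ m - t by omega, ?_⟩
  show (⟨m, σ⟩ : Σ n, Equiv.Perm (Fin n)) = ⟨t + (m - t), finSumFinEquiv.permCongr (Equiv.Perm.sumCongr q r)⟩
  apply sigma_perm_eq (by omega)
  intro i hi hi'
  rcases lt_or_ge i t with hit | hit
  · have hcast : (⟨i, hi'⟩ : Fin (t + (m - t))) = Fin.castAdd (m - t) ⟨i, hit⟩ := rfl
    rw [hcast, Equiv.permCongr_apply, finSumFinEquiv_symm_apply_castAdd]
    simp only [Equiv.Perm.sumCongr_apply, Sum.map_inl, finSumFinEquiv_apply_left,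
      Fin.coe_castAdd, q, Equiv.ofBijective_apply]
  · have hcast : (⟨i, hi'⟩ : Fin (t + (m - t))) = Fin.natAdd t ⟨i - t, by omega⟩ := Fin.ext (by simp; omega)
    rw [hcast, Equiv.permCongr_apply, finSumFinEquiv_symm_apply_natAdd]
    simp only [Equiv.Perm.sumCongr_apply, Sum.map_inr, finSumFinEquiv_apply_right,
      Fin.coe_natAdd, r, Equiv.ofBijective_apply]
    have key : (⟨i - t + t, by omega⟩ : Fin m) = ⟨i, hi⟩ := Fin.ext (by simp; omega)
    rw [key]
    have := hup ⟨i, hi⟩ (by simpa using hit)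
    omega

theorem occurrences_localized_and_count_bound (m n : ℕ) (hm : 1 ≤ m)
    (σ : Equiv.Perm (Fin m)) (hind : Indecomposable ⟨m, σ⟩)
    (π : Equiv.Perm (Fin n)) (Δ : ℕ)
    (hΔ : Δ = Finset.univ.sup (fun i : Fin n => ((π i : ℤ) - (i : ℤ)).natAbs)) :
    (∀ f : Fin m → Fin n, IsOcc σ π f → ∀ i : Fin m, (⟨0, hm⟩ : Fin m) < i →
      f ⟨0, hm⟩ < f i ∧ (f i : ℕ) ≤ (f ⟨0, hm⟩ : ℕ) + 2 * m * Δ) ∧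
    occCount σ π ≤ (2 * m * Δ) ^ (m - 1) * n := by
  classical
  have hΔb : ∀ x : Fin n, (π x : ℕ) ≤ (x : ℕ) + Δ ∧ (x : ℕ) ≤ (π x : ℕ) + Δ := by
    intro x
    have h1 := Finset.le_sup (f := fun i : Fin n => ((π i : ℤ) - (i : ℤ)).natAbs)
      (Finset.mem_univ x)
    rw [← hΔ] at h1
    omega
  have key : ∀ t, 1 ≤ t → t < m → ∃ i : Fin m, (i : ℕ) < t ∧ t ≤ ((σ i : Fin m) : ℕ) := by
    intro t h1 h2
    by_contra hc
    push_neg at hc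
    exact hind.2 (decomp_of_maps σ h1 h2 hc)
  have key2 : ∀ t, 1 ≤ t → t < m → ∃ i j : Fin m, (i : ℕ) < t ∧ t ≤ (j : ℕ) ∧
      ((σ j : Fin m) : ℕ) < t ∧ t ≤ ((σ i : Fin m) : ℕ) := by
    intro t h1 h2
    obtain ⟨i, hi1, hi2⟩ := key t h1 h2
    have hj : ∃ j : Fin m, t ≤ (j : ℕ) ∧ ((σ j : Fin m) : ℕ) < t := by
      by_contra hc
      push_neg at hc
      have hinv : ∀ x : Fin m, (x : ℕ) < t → ((σ⁻¹ x : Fin m) : ℕ) < t := by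
        intro x hx
        by_contra hcc
        push_neg at hcc
        have := hc (σ⁻¹ x) hcc
        simp only [Equiv.Perm.inv_def, Equiv.apply_symm_apply] at this
        omega
      obtain ⟨y, hy1, hy2⟩ := maps_surj σ⁻¹ hinv i hi1
      have hyi : σ i = y := by rw [← hy2]; simp
      rw [hyi] at hi2; omega
    obtain ⟨j, hj1, hj2⟩ := hj
    exact ⟨i, j, hi1, hj1, hj2, hi2⟩
  have H : ∀ f : Fin m → Fin n, IsOcc σ π f → ∀ i : Fin m, (⟨0, hm⟩ : Fin m) < i →
      f ⟨0, hm⟩ < f i ∧ (f i : ℕ) ≤ (f ⟨0, hm⟩ : ℕ) + 2 * m * Δ := by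
    intro f hf i hi
    have hstep : ∀ t : ℕ, 1 ≤ t → ∀ (h2 : t < m) (h3 : t - 1 < m),
        (f ⟨t, h2⟩ : ℕ) ≤ (f ⟨t - 1, h3⟩ : ℕ) + 2 * Δ := by
      intro t h1 h2 h3
      obtain ⟨a, b, ha1, hb1, hb2, ha2⟩ := key2 t h1 h2
      have hσ : σ b < σ a := by rw [Fin.lt_def]; omega
      have hπ : ((π (f b) : Fin n) : ℕ) < ((π (f a) : Fin n) : ℕ) := (hf.2 b a).mpr hσ
      have d1 := hΔb (f a)
      have d2 := hΔb (f b)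
      have hmono1 : f a ≤ f ⟨t - 1, h3⟩ :=
        hf.1.monotone (Fin.le_def.mpr (show (a : ℕ) ≤ t - 1 by omega))
      have hmono2 : f ⟨t, h2⟩ ≤ f b :=
        hf.1.monotone (Fin.le_def.mpr (show t ≤ (b : ℕ) by omega))
      rw [Fin.le_def] at hmono1 hmono2
      omega
    have hfcong : ∀ (a b : ℕ) (pa : a < m) (pb : b < m), a = b →
        (f ⟨a, pa⟩ : ℕ) = (f ⟨b, pb⟩ : ℕ) := by
      intro a b pa pb hab
      subst hab; rfl
    have hacc : ∀ t : ℕ, ∀ (ht : t < m), (f ⟨t, ht⟩ : ℕ) ≤ (f ⟨0, hm⟩ : ℕ) + 2 * Δ * t := by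
      intro t
      induction t with
      | zero =>
        intro ht
        rw [hfcong 0 0 ht hm rfl]
        omega
      | succ s ih =>
        intro ht
        have hsm : s < m := by omega
        have h1 := hstep (s + 1) (by omega) ht (by omega)
        have h2 := ih hsm
        rw [hfcong (s + 1 - 1) s (by omega) hsm (by omega)] at h1
        calc (f ⟨s + 1, ht⟩ : ℕ) ≤ (f ⟨s, hsm⟩ : ℕ) + 2 * Δ := h1
          _ ≤ ((f ⟨0, hm⟩ : ℕ) + 2 * Δ * s) + 2 * Δ := Nat.add_le_add_right h2 _
          _ = (f ⟨0, hm⟩ : ℕ) + 2 * Δ * (s + 1) := by ring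
    constructor
    · exact hf.1 hi
    · have h1 := hacc i.1 i.2
      rw [hfcong i.1 i.1 i.2 i.2 rfl] at h1
      have h2 : f ⟨i.1, i.2⟩ = f i := congrArg f (Fin.ext rfl)
      rw [h2] at h1
      have h3 : 2 * Δ * i.1 ≤ 2 * m * Δ := by
        calc 2 * Δ * i.1 ≤ 2 * Δ * m := Nat.mul_le_mul_left _ (le_of_lt i.2)
          _ = 2 * m * Δ := by ring
      exact le_trans h1 (Nat.add_le_add_left h3 _)
  refine ⟨H, ?_⟩
  set K := 2 * m * Δ with hK
  let Φ : {f : Fin m → Fin n // IsOcc σ π f} → Fin n × (Fin (m - 1) → Fin K) :=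
    fun F => (F.1 ⟨0, hm⟩, fun i =>
      ⟨(F.1 ⟨i.1 + 1, by have := i.2; omega⟩ : ℕ) - (F.1 ⟨0, hm⟩ : ℕ) - 1, by
        have hb := H F.1 F.2 ⟨i.1 + 1, by have := i.2; omega⟩
          (by rw [Fin.lt_def]; exact Nat.succ_pos _)
        have hb1 := hb.1
        have hb2 := hb.2
        rw [Fin.lt_def] at hb1
        omega⟩)
  have hinj : Function.Injective Φ := by
    rintro ⟨f, hf⟩ ⟨g, hg⟩ heq
    rw [Prod.ext_iff] at heq
    obtain ⟨h0, hfun⟩ := heq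
    simp only [Φ] at h0 hfun
    have h0v : (f ⟨0, hm⟩ : ℕ) = (g ⟨0, hm⟩ : ℕ) := congrArg Fin.val h0
    apply Subtype.ext
    funext x
    show f x = g x
    rcases Nat.eq_zero_or_pos x.1 with hx | hx
    · have hx0 : x = ⟨0, hm⟩ := Fin.ext hx
      rw [hx0]; exact h0
    · have hx1 : x.1 - 1 < m - 1 := by have := x.2; omega
      have hv := congrArg Fin.val (congrFun hfun ⟨x.1 - 1, hx1⟩)
      simp only at hv
      have hfx : ∀ (p : x.1 - 1 + 1 < m), (f ⟨x.1 - 1 + 1, p⟩ : ℕ) = (f x : ℕ) :=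
        fun p => congrArg (fun y => (f y : ℕ)) (Fin.ext (show x.1 - 1 + 1 = x.1 by omega))
      have hgx : ∀ (p : x.1 - 1 + 1 < m), (g ⟨x.1 - 1 + 1, p⟩ : ℕ) = (g x : ℕ) :=
        fun p => congrArg (fun y => (g y : ℕ)) (Fin.ext (show x.1 - 1 + 1 = x.1 by omega))
      rw [hfx, hgx] at hv
      have hfb := (H f hf x (Fin.lt_def.mpr (show 0 < x.1 from hx))).1
      have hgb := (H g hg x (Fin.lt_def.mpr (show 0 < x.1 from hx))).1
      rw [Fin.lt_def] at hfb hgb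
      exact Fin.ext (by omega)
  have hle := Nat.card_le_card_of_injective Φ hinj
  have hcard : Nat.card (Fin n × (Fin (m - 1) → Fin K)) = K ^ (m - 1) * n := by
    simp [Nat.card_eq_fintype_card, mul_comm]
  rw [hcard] at hle
  exact hle
end

section
/- The number of 321-avoiding permutations of {1,…,n} equals the n-th Catalan number C_n = (1/(n+1)) · C(2n, n). -/
open Finset

namespace Av321


/-- Monotone staircase functions: the Catalan-counted encoding object. -/
def Stair (n : ℕ) : Type := {m : Fin n → Fin n // Monotone m ∧ ∀ i : Fin n, (i : ℕ) ≤ (m i : ℕ)}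

instance (n : ℕ) : Finite (Stair n) := Subtype.finite

instance : Unique (Stair 0) where
  default := ⟨fun i => i.elim0, fun i => i.elim0, fun i => i.elim0⟩
  uniq := fun _ => Subtype.ext (funext fun i => i.elim0)

variable {n : ℕ}

/-- glue two staircases into one of size `n+1` with diagonal touch at `j`. -/
def glue (j : Fin (n + 1)) (a : Fin j.val → Fin j.val)
    (b : Fin (n - j.val) → Fin (n - j.val)) : Fin (n + 1) → Fin (n + 1) := fun i =>
  if h : (i : ℕ) < j then ⟨(a ⟨i, h⟩ : ℕ) + 1, by have := (a ⟨i, h⟩).isLt; omega⟩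
  else if h2 : (i : ℕ) = j then ⟨j, j.isLt⟩
  else ⟨(b ⟨(i : ℕ) - j - 1, by have := i.isLt; omega⟩ : ℕ) + j + 1, by
    have := (b ⟨(i : ℕ) - j - 1, by have := i.isLt; omega⟩).isLt
    have := i.isLt; omega⟩

theorem glue_val_lt {j : Fin (n + 1)} {a : Fin j.val → Fin j.val}
    {b : Fin (n - j.val) → Fin (n - j.val)} {i : Fin (n + 1)} (h : (i : ℕ) < j) :
    (glue j a b i : ℕ) = (a ⟨i, h⟩ : ℕ) + 1 := by
  unfold glue; rw [dif_pos h]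

theorem glue_val_eq {j : Fin (n + 1)} {a : Fin j.val → Fin j.val}
    {b : Fin (n - j.val) → Fin (n - j.val)} {i : Fin (n + 1)} (h : (i : ℕ) = j) :
    (glue j a b i : ℕ) = j := by
  unfold glue; rw [dif_neg (by omega), dif_pos h]

theorem glue_val_gt {j : Fin (n + 1)} {a : Fin j.val → Fin j.val}
    {b : Fin (n - j.val) → Fin (n - j.val)} {i : Fin (n + 1)} (h : (j : ℕ) < i) :
    (glue j a b i : ℕ) =
      (b ⟨(i : ℕ) - j - 1, by have := i.isLt; omega⟩ : ℕ) + j + 1 := by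
  unfold glue; rw [dif_neg (by omega), dif_neg (by omega)]

theorem glue_prop' (j : Fin (n + 1)) (a : Fin j.val → Fin j.val) (ha : Monotone a)
    (ha' : ∀ i : Fin j.val, (i : ℕ) ≤ (a i : ℕ)) (b : Fin (n - j.val) → Fin (n - j.val)) (hb : Monotone b)
    (hb' : ∀ i : Fin (n - j.val), (i : ℕ) ≤ (b i : ℕ)) :
    Monotone (glue j a b) ∧ ∀ i : Fin (n+1), (i : ℕ) ≤ (glue j a b i : ℕ) := by
  constructor
  · intro i i' hii'
    have hv : (i : ℕ) ≤ (i' : ℕ) := hii'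
    rw [Fin.le_def]
    rcases lt_trichotomy ((i : ℕ)) (j : ℕ) with h1 | h1 | h1
    · rw [glue_val_lt h1]
      have hbd := (a ⟨i, h1⟩).isLt
      rcases lt_trichotomy ((i' : ℕ)) (j : ℕ) with h2 | h2 | h2
      · rw [glue_val_lt h2]
        have := ha (show (⟨(i:ℕ), h1⟩ : Fin j.val) ≤ ⟨(i':ℕ), h2⟩ from hv)
        rw [Fin.le_def] at this
        omega
      · rw [glue_val_eq h2]; omega
      · rw [glue_val_gt h2]; omega
    · rw [glue_val_eq h1]
      rcases lt_trichotomy ((i' : ℕ)) (j : ℕ) with h2 | h2 | h2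
      · omega
      · rw [glue_val_eq h2]
      · rw [glue_val_gt h2]; omega
    · rw [glue_val_gt h1]
      have h2 : (j : ℕ) < i' := by omega
      rw [glue_val_gt h2]
      have := hb (show (⟨(i:ℕ) - j - 1, by have := i.isLt; omega⟩ : Fin (n - j.val)) ≤
          ⟨(i':ℕ) - j - 1, by have := i'.isLt; omega⟩ from by
        rw [Fin.le_def]; exact Nat.sub_le_sub_right (Nat.sub_le_sub_right hv _) _)
      rw [Fin.le_def] at this
      omega
  · intro i
    rcases lt_trichotomy ((i : ℕ)) (j : ℕ) with h1 | h1 | h1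
    · rw [glue_val_lt h1]
      have := ha' ⟨i, h1⟩
      simp only [Fin.val_mk] at this
      omega
    · rw [glue_val_eq h1]; omega
    · rw [glue_val_gt h1]
      have := hb' ⟨(i : ℕ) - j - 1, by have := i.isLt; omega⟩
      simp only [Fin.val_mk] at this
      omega

theorem glue_prop (j : Fin (n + 1)) (a : Stair j.val) (b : Stair (n - j.val)) :
    Monotone (glue j a.1 b.1) ∧ ∀ i : Fin (n+1), (i : ℕ) ≤ (glue j a.1 b.1 i : ℕ) :=
  glue_prop' j a.1 a.2.1 a.2.2 b.1 b.2.1 b.2.2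

theorem touch_nonempty (m : Stair (n + 1)) :
    (Finset.univ.filter (fun i : Fin (n + 1) => (m.1 i : ℕ) = i)).Nonempty := by
  refine ⟨Fin.last n, ?_⟩
  simp only [mem_filter, mem_univ, true_and]
  have h1 := m.2.2 (Fin.last n)
  have h2 := (m.1 (Fin.last n)).isLt
  simp only [Fin.val_last] at *
  omega

noncomputable def firstTouch (m : Stair (n + 1)) : Fin (n + 1) :=
  (Finset.univ.filter (fun i : Fin (n + 1) => (m.1 i : ℕ) = i)).min' (touch_nonempty m)

theorem firstTouch_eq (m : Stair (n + 1)) : (m.1 (firstTouch m) : ℕ) = firstTouch m := by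
  have := Finset.min'_mem _ (touch_nonempty m)
  exact (Finset.mem_filter.mp this).2

theorem firstTouch_min (m : Stair (n + 1)) {i : Fin (n + 1)} (h : (m.1 i : ℕ) = i) :
    firstTouch m ≤ i :=
  Finset.min'_le _ _ (by simpa using h)

theorem lt_firstTouch (m : Stair (n + 1)) {i : Fin (n + 1)} (h : (i : ℕ) < (firstTouch m : ℕ)) :
    (i : ℕ) < (m.1 i : ℕ) := by
  have h1 := m.2.2 i
  rcases lt_or_eq_of_le h1 with h2 | h2
  · exact h2
  · have := firstTouch_min m h2.symm
    rw [Fin.le_def] at this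
    omega

noncomputable def splitFn (m : Stair (n + 1)) :
    Σ j : Fin (n + 1), Stair j.val × Stair (n - j.val) :=
  ⟨firstTouch m,
    ⟨fun i => ⟨(m.1 (Fin.castLE (by omega) i) : ℕ) - 1, by
        have h1 := lt_firstTouch m (i := Fin.castLE (by omega) i)
          (by simpa using i.isLt)
        have h2 : m.1 (Fin.castLE (by omega) i) ≤ m.1 (firstTouch m) :=
          m.2.1 (by rw [Fin.le_def]; simpa using le_of_lt i.isLt)
        rw [Fin.le_def] at h2
        have h3 := firstTouch_eq m
        simp only [Fin.coe_castLE] at *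
        omega⟩,
      by
        intro x y hxy
        rw [Fin.le_def]
        simp only [Fin.val_mk]
        have := m.2.1 (show Fin.castLE (by omega) x ≤ Fin.castLE (by omega) y from by
          rw [Fin.le_def]; simpa using hxy)
        rw [Fin.le_def] at this
        omega,
      by
        intro i
        have h1 := lt_firstTouch m (i := Fin.castLE (by omega) i)
          (by simpa using i.isLt)
        simp only [Fin.val_mk, Fin.coe_castLE] at *
        omega⟩,
    ⟨fun i => ⟨(m.1 ⟨(firstTouch m : ℕ) + 1 + i, by have := i.isLt; omega⟩ : ℕ)
        - ((firstTouch m : ℕ) + 1), by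
        have h1 := m.2.2 ⟨(firstTouch m : ℕ) + 1 + i, by have := i.isLt; omega⟩
        have h2 := (m.1 ⟨(firstTouch m : ℕ) + 1 + i, by have := i.isLt; omega⟩).isLt
        have := i.isLt
        simp only [Fin.val_mk] at *
        omega⟩,
      by
        intro x y hxy
        rw [Fin.le_def]
        simp only [Fin.val_mk]
        have hxy' : (x : ℕ) ≤ y := hxy
        have := m.2.1
          (show (⟨(firstTouch m : ℕ) + 1 + x, by have := x.isLt; omega⟩ : Fin (n+1)) ≤
            ⟨(firstTouch m : ℕ) + 1 + y, by have := y.isLt; omega⟩ from by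
          rw [Fin.le_def]; simp only [Fin.val_mk]; omega)
        rw [Fin.le_def] at this
        omega,
      by
        intro i
        have h1 := m.2.2 ⟨(firstTouch m : ℕ) + 1 + i, by have := i.isLt; omega⟩
        simp only [Fin.val_mk] at *
        omega⟩⟩

noncomputable def glueFn (s : Σ j : Fin (n + 1), Stair j.val × Stair (n - j.val)) :
    Stair (n + 1) :=
  ⟨glue s.1 s.2.1.1 s.2.2.1, glue_prop s.1 s.2.1 s.2.2⟩

theorem firstTouch_glue (j : Fin (n + 1)) (a : Stair j.val) (b : Stair (n - j.val)) :
    firstTouch (glueFn ⟨j, a, b⟩) = j := by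
  have hj : ((glueFn ⟨j, a, b⟩).1 j : ℕ) = j := glue_val_eq rfl
  have h1 : firstTouch (glueFn ⟨j, a, b⟩) ≤ j := firstTouch_min _ hj
  have h2 : ¬ ((firstTouch (glueFn ⟨j, a, b⟩) : ℕ) < j) := by
    intro h
    have heq := firstTouch_eq (glueFn ⟨j, a, b⟩)
    rw [show ((glueFn ⟨j, a, b⟩).1 (firstTouch (glueFn ⟨j, a, b⟩)) : ℕ) = _ from glue_val_lt h]
      at heq
    have heq' : ((a.1 ⟨(firstTouch (glueFn ⟨j, a, b⟩) : ℕ), h⟩ : Fin j.val) : ℕ) + 1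
        = (firstTouch (glueFn ⟨j, a, b⟩) : ℕ) := heq
    have := a.2.2 ⟨firstTouch (glueFn ⟨j, a, b⟩), h⟩
    simp only [Fin.val_mk] at this
    omega
  apply le_antisymm h1
  rw [Fin.le_def]
  omega

theorem glue_split (m : Stair (n + 1)) : glueFn (splitFn m) = m := by
  apply Subtype.ext
  funext i
  apply Fin.ext
  show (glue (firstTouch m) _ _ i : ℕ) = (m.1 i : ℕ)
  rcases lt_trichotomy ((i : ℕ)) ((firstTouch m : ℕ)) with h1 | h1 | h1
  · erw [glue_val_lt h1]
    show ((m.1 (Fin.castLE _ ⟨(i:ℕ), h1⟩) : ℕ) - 1) + 1 = (m.1 i : ℕ)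
    have hc : Fin.castLE (by omega) (⟨(i:ℕ), h1⟩ : Fin (firstTouch m).val) = i := by
      apply Fin.ext; simp
    rw [hc]
    have := lt_firstTouch m h1
    omega
  · erw [glue_val_eq h1]
    have := firstTouch_eq m
    have hi : i = firstTouch m := Fin.ext h1
    rw [hi, this]
  · erw [glue_val_gt h1]
    show ((m.1 ⟨(firstTouch m : ℕ) + 1 + ((i:ℕ) - firstTouch m - 1), _⟩ : ℕ)
      - ((firstTouch m : ℕ) + 1)) + (firstTouch m) + 1 = (m.1 i : ℕ)
    have hc : (⟨(firstTouch m : ℕ) + 1 + ((i:ℕ) - firstTouch m - 1),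
        by have := i.isLt; omega⟩ : Fin (n+1)) = i := by
      apply Fin.ext; simp only [Fin.val_mk]; omega
    rw [hc]
    have := m.2.2 i
    omega

theorem glueFn_injective :
    Function.Injective (glueFn (n := n)) := by
  rintro ⟨j, ab⟩ ⟨j', ab'⟩ h
  have hj : j = j' := by
    rw [← firstTouch_glue j ab.1 ab.2, ← firstTouch_glue j' ab'.1 ab'.2]
    exact congrArg firstTouch h
  subst hj
  have hf : glue j ab.1.1 ab.2.1 = glue j ab'.1.1 ab'.2.1 := congrArg Subtype.val h
  refine congrArg (Sigma.mk j) (Prod.ext ?_ ?_)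
  · apply Subtype.ext
    funext i
    have hxlt : (i : ℕ) < n + 1 := by have := j.isLt; have := i.isLt; omega
    have hlt : (((⟨(i:ℕ), hxlt⟩ : Fin (n+1))) : ℕ) < j := i.isLt
    have h1 := congrArg Fin.val (congrFun hf ⟨(i:ℕ), hxlt⟩)
    rw [glue_val_lt hlt, glue_val_lt hlt] at h1
    have h2 : (⟨((⟨(i:ℕ), hxlt⟩ : Fin (n+1)) : ℕ), hlt⟩ : Fin j.val) = i := Fin.ext rfl
    rw [h2] at h1
    exact Fin.ext (by omega)
  · apply Subtype.ext
    funext i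
    have hx : ((j:ℕ) + 1 + (i:ℕ)) < n + 1 := by have := i.isLt; omega
    have hgt : (j : ℕ) < ((⟨(j:ℕ) + 1 + (i:ℕ), hx⟩ : Fin (n+1)) : ℕ) := by
      simp only [Fin.val_mk]; omega
    have h1 := congrArg Fin.val (congrFun hf ⟨(j:ℕ) + 1 + (i:ℕ), hx⟩)
    rw [glue_val_gt hgt, glue_val_gt hgt] at h1
    have h2 : (⟨((⟨(j:ℕ) + 1 + (i:ℕ), hx⟩ : Fin (n+1)) : ℕ) - j - 1,
        by have := i.isLt; simp only [Fin.val_mk]; omega⟩ : Fin (n - j.val)) = i :=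
      Fin.ext (by simp only [Fin.val_mk]; omega)
    rw [h2] at h1
    exact Fin.ext (by omega)

noncomputable def stairEquiv :
    Stair (n + 1) ≃ Σ j : Fin (n + 1), Stair j.val × Stair (n - j.val) :=
  ⟨splitFn, glueFn, glue_split, fun x => glueFn_injective (glue_split (glueFn x))⟩

theorem stair_card : ∀ n : ℕ, Nat.card (Stair n) = catalan n := by
  intro n
  induction n using Nat.strong_induction_on with
  | _ n ih =>
    match n with
    | 0 => simp [Nat.card_unique, catalan_zero]
    | (k + 1) =>
      rw [Nat.card_congr stairEquiv]
      haveI : ∀ j : Fin (k+1), Fintype (Stair j.val × Stair (k - j.val)) :=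
        fun _ => Fintype.ofFinite _
      rw [Nat.card_eq_fintype_card, Fintype.card_sigma, catalan_succ]
      apply Finset.sum_congr rfl
      intro j _
      rw [← Nat.card_eq_fintype_card, Nat.card_prod,
        ih j.val (by have := j.isLt; omega), ih (k - j.val) (by have := j.isLt; omega)]

variable {n : ℕ}

/-- positions where `f` strictly exceeds all earlier values. -/
def jumps (f : Fin n → Fin n) : Finset (Fin n) :=
  Finset.univ.filter (fun i => ∀ j < i, f j < f i)

theorem mem_jumps {f : Fin n → Fin n} {i : Fin n} :
    i ∈ jumps f ↔ ∀ j < i, f j < f i := by simp [jumps]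

theorem injOn_jumps (f : Fin n → Fin n) :
    Set.InjOn f (jumps f) := by
  intro i hi j hj hij
  rcases lt_trichotomy i j with h | h | h
  · exact absurd hij (ne_of_lt ((mem_jumps.mp (by simpa using hj)) i h))
  · exact h
  · exact absurd hij.symm (ne_of_lt ((mem_jumps.mp (by simpa using hi)) j h))

/-- values not attained at jumps. -/
def cvals (f : Fin n → Fin n) : Finset (Fin n) := ((jumps f).image f)ᶜ

theorem card_cvals (f : Fin n → Fin n) : (cvals f).card = ((jumps f)ᶜ).card := by
  rw [cvals, Finset.card_compl, Finset.card_compl,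
    Finset.card_image_of_injOn (injOn_jumps f)]

theorem compl_emb_lt {s : Finset (Fin n)} {k : ℕ} {hk : s.card = k} {b : Fin n} {j : Fin k}
    (hc : (j : ℕ) < (s.filter (· ≤ b)).card) :
    s.orderEmbOfFin hk j ≤ b := by
  subst hk
  by_contra hb
  push_neg at hb
  have hsub : s.filter (· ≤ b) ⊆ (Finset.Iio j).image (s.orderEmbOfFin rfl) := by
    intro x hx
    rw [Finset.mem_filter] at hx
    obtain ⟨l, hl⟩ : ∃ l, s.orderEmbOfFin rfl l = x := by
      have : x ∈ Set.range (s.orderEmbOfFin rfl) := by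
        rw [Finset.range_orderEmbOfFin]; exact hx.1
      exact this
    have hlj : l < j := by
      have := (s.orderEmbOfFin rfl).strictMono.lt_iff_lt (a := l) (b := j)
      rw [← this]
      rw [hl]
      exact lt_of_le_of_lt hx.2 hb
    exact Finset.mem_image.mpr ⟨l, Finset.mem_Iio.mpr hlj, hl⟩
  have := Finset.card_le_card hsub
  rw [Finset.card_image_of_injective _ (s.orderEmbOfFin rfl).injective, Fin.card_Iio] at this
  omega

theorem lt_card_filter_emb (s : Finset (Fin n)) (j : Fin s.card) :
    (j : ℕ) < (s.filter (· ≤ s.orderEmbOfFin rfl j)).card := by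
  have hsub : (Finset.Iic j).image (s.orderEmbOfFin rfl) ⊆
      s.filter (· ≤ s.orderEmbOfFin rfl j) := by
    intro x hx
    rw [Finset.mem_image] at hx
    obtain ⟨l, hl, rfl⟩ := hx
    rw [Finset.mem_filter]
    exact ⟨Finset.orderEmbOfFin_mem _ _ _,
      (s.orderEmbOfFin rfl).monotone (Finset.mem_Iic.mp hl)⟩
  have := Finset.card_le_card hsub
  rw [Finset.card_image_of_injective _ (s.orderEmbOfFin rfl).injective, Fin.card_Iic] at this
  omega

/-- decode a staircase function into (what will be) a 321-avoiding permutation. -/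
noncomputable def decodeFun (f : Fin n → Fin n) (i : Fin n) : Fin n :=
  if h : i ∈ jumps f then f i
  else (cvals f).orderEmbOfFin (card_cvals f)
    ((((jumps f)ᶜ).orderIsoOfFin rfl).symm ⟨i, by simpa using h⟩)

theorem decodeFun_jump {f : Fin n → Fin n} {i : Fin n} (h : i ∈ jumps f) :
    decodeFun f i = f i := by rw [decodeFun, dif_pos h]

theorem decodeFun_nonjump {f : Fin n → Fin n} {i : Fin n} (h : i ∉ jumps f) :
    decodeFun f i = (cvals f).orderEmbOfFin (card_cvals f)
      ((((jumps f)ᶜ).orderIsoOfFin rfl).symm ⟨i, by simpa using h⟩) := by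
  rw [decodeFun, dif_neg h]

theorem decodeFun_nonjump_mem {f : Fin n → Fin n} {i : Fin n} (h : i ∉ jumps f) :
    decodeFun f i ∈ cvals f := by
  rw [decodeFun_nonjump h]
  exact Finset.orderEmbOfFin_mem _ _ _

theorem decodeFun_jump_mem {f : Fin n → Fin n} {i : Fin n} (h : i ∈ jumps f) :
    decodeFun f i ∈ (jumps f).image f := by
  rw [decodeFun_jump h]
  exact Finset.mem_image_of_mem f h

section WithHyp

variable {f : Fin n → Fin n} (hmono : Monotone f) (hdiag : ∀ i : Fin n, (i : ℕ) ≤ (f i : ℕ))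

/-- every value of a monotone staircase is attained at a jump weakly before. -/
theorem exists_jump (hmono : Monotone f) :
    ∀ i : Fin n, ∃ j, j ≤ i ∧ j ∈ jumps f ∧ f j = f i := by
  suffices H : ∀ k : ℕ, ∀ i : Fin n, (i : ℕ) ≤ k → ∃ j, j ≤ i ∧ j ∈ jumps f ∧ f j = f i by
    intro i; exact H n i (by omega)
  intro k
  induction k with
  | zero =>
    intro i hi
    refine ⟨i, le_rfl, mem_jumps.mpr ?_, rfl⟩
    intro j hj
    rw [Fin.lt_def] at hj
    omega
  | succ k ih =>
    intro i hi
    by_cases h : i ∈ jumps f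
    · exact ⟨i, le_rfl, h, rfl⟩
    · rw [mem_jumps] at h
      push_neg at h
      obtain ⟨j, hj, hfj⟩ := h
      have hfj' : f j = f i := le_antisymm (hmono (le_of_lt hj)) hfj
      have hjk : (j : ℕ) ≤ k := by rw [Fin.lt_def] at hj; omega
      obtain ⟨j', hj1, hj2, hj3⟩ := ih j hjk
      exact ⟨j', le_trans hj1 (le_of_lt hj), hj2, by rw [hj3, hfj']⟩

/-- for a jump `j`, `f j ≤ f i ↔ j ≤ i`. -/
theorem jump_le_iff (hmono : Monotone f) {j i : Fin n} (hj : j ∈ jumps f) :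
    f j ≤ f i ↔ j ≤ i := by
  constructor
  · intro h
    by_contra hc
    push_neg at hc
    exact absurd h (not_le.mpr (mem_jumps.mp hj i hc))
  · exact fun h => hmono h

theorem card_cvals_filter (hmono : Monotone f) (i : Fin n) :
    ((cvals f).filter (· ≤ f i)).card =
      ((f i : ℕ) + 1) - ((jumps f).filter (· ≤ i)).card := by
  have h1 : ((jumps f).image f).filter (· ≤ f i) = ((jumps f).filter (· ≤ i)).image f := by
    rw [Finset.filter_image]
    congr 1
    apply Finset.filter_congr
    intro j hj
    exact jump_le_iff hmono hj
  have h2 : (cvals f).filter (· ≤ f i) =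
      (Finset.Iic (f i)) \ (((jumps f).image f).filter (· ≤ f i)) := by
    ext x
    simp only [cvals, Finset.mem_filter, Finset.mem_compl, Finset.mem_sdiff, Finset.mem_Iic]
    tauto
  rw [h2, Finset.card_sdiff_of_subset (by intro x hx; simp only [Finset.mem_filter, Finset.mem_Iic] at *; tauto),
    h1, Finset.card_image_of_injOn (Set.InjOn.mono (by intro x hx; simp only [Finset.coe_filter, Set.mem_setOf_eq, Finset.mem_coe] at *; tauto) (injOn_jumps f)), Fin.card_Iic]

theorem card_nonjumps_filter (i : Fin n) :
    (((jumps f)ᶜ).filter (· ≤ i)).card = ((i : ℕ) + 1) - ((jumps f).filter (· ≤ i)).card := by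
  have h : ((jumps f).filter (· ≤ i)).card + (((jumps f)ᶜ).filter (· ≤ i)).card
      = (i : ℕ) + 1 := by
    rw [← Fin.card_Iic i, ← Finset.card_union_of_disjoint]
    · congr 1
      ext x
      simp only [Finset.mem_union, Finset.mem_filter, Finset.mem_compl, Finset.mem_Iic]
      tauto
    · apply Finset.disjoint_filter_filter
      exact disjoint_compl_right
  omega

theorem jumps_filter_card_le (i : Fin n) : ((jumps f).filter (· ≤ i)).card ≤ (i : ℕ) + 1 := by
  have h := Finset.card_le_card (show (jumps f).filter (· ≤ i) ⊆ Finset.Iic i by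
    intro x hx; simp only [Finset.mem_filter, Finset.mem_Iic] at *; tauto)
  rwa [Fin.card_Iic] at h

theorem decodeFun_le (hmono : Monotone f) (hdiag : ∀ i : Fin n, (i : ℕ) ≤ (f i : ℕ))
    (i : Fin n) : decodeFun f i ≤ f i := by
  by_cases h : i ∈ jumps f
  · rw [decodeFun_jump h]
  · rw [decodeFun_nonjump h]
    set idx := (((jumps f)ᶜ).orderIsoOfFin rfl).symm ⟨i, by simpa using h⟩ with hidx
    have hi : ((jumps f)ᶜ).orderEmbOfFin rfl idx = i := by
      rw [← Finset.coe_orderIsoOfFin_apply, hidx, OrderIso.apply_symm_apply]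
    have h6 : (idx : ℕ) < (((jumps f)ᶜ).filter (· ≤ i)).card := by
      have := lt_card_filter_emb ((jumps f)ᶜ) idx
      rwa [hi] at this
    have h7 := card_nonjumps_filter (f := f) i
    have h4 := card_cvals_filter hmono i
    have h8 := jumps_filter_card_le (f := f) i
    have h9 := hdiag i
    -- transport idx through the card equality
    apply compl_emb_lt
    omega

theorem decodeFun_lt_decodeFun {i i' : Fin n} (hn1 : i ∉ jumps f) (hn2 : i' ∉ jumps f)
    (hii' : i < i') : decodeFun f i < decodeFun f i' := by
  rw [decodeFun_nonjump hn1, decodeFun_nonjump hn2]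
  apply ((cvals f).orderEmbOfFin (card_cvals f)).strictMono
  apply (((jumps f)ᶜ).orderIsoOfFin rfl).symm.strictMono
  exact hii'

theorem decodeFun_injective : Function.Injective (decodeFun f) := by
  intro i i' h
  by_cases h1 : i ∈ jumps f <;> by_cases h2 : i' ∈ jumps f
  · rw [decodeFun_jump h1, decodeFun_jump h2] at h
    exact injOn_jumps f h1 h2 h
  · exact absurd (h ▸ decodeFun_jump_mem h1)
      (by have := decodeFun_nonjump_mem h2; rw [cvals, Finset.mem_compl] at this; exact this)
  · exact absurd (h.symm ▸ decodeFun_jump_mem h2)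
      (by have := decodeFun_nonjump_mem h1; rw [cvals, Finset.mem_compl] at this; exact this)
  · rcases lt_trichotomy i i' with hc | hc | hc
    · exact absurd h (ne_of_lt (decodeFun_lt_decodeFun h1 h2 hc))
    · exact hc
    · exact absurd h.symm (ne_of_lt (decodeFun_lt_decodeFun h2 h1 hc))

/-- the decoded permutation. -/
noncomputable def decodePerm (f : Fin n → Fin n) : Equiv.Perm (Fin n) :=
  Equiv.ofBijective (decodeFun f) (Finite.injective_iff_bijective.mp decodeFun_injective)

theorem decodePerm_apply (f : Fin n → Fin n) (i : Fin n) : decodePerm f i = decodeFun f i := rfl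

theorem decodePerm_avoids (hmono : Monotone f) (hdiag : ∀ i : Fin n, (i : ℕ) ≤ (f i : ℕ)) :
    ¬ ∃ i j k : Fin n, i < j ∧ j < k ∧
      decodePerm f k < decodePerm f j ∧ decodePerm f j < decodePerm f i := by
  rintro ⟨i, j, k, hij, hjk, h1, h2⟩
  rw [decodePerm_apply, decodePerm_apply] at h1 h2
  have hj : j ∉ jumps f := by
    intro hj
    have hfij : f i < f j := mem_jumps.mp hj i hij
    have := decodeFun_le hmono hdiag i
    rw [← decodeFun_jump hj] at hfij
    exact absurd h2 (not_lt.mpr (le_of_lt (lt_of_le_of_lt this hfij)))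
  have hk : k ∉ jumps f := by
    intro hk
    have hfjk : f j < f k := mem_jumps.mp hk j hjk
    have := decodeFun_le hmono hdiag j
    rw [← decodeFun_jump hk] at hfjk
    exact absurd h1 (not_lt.mpr (le_of_lt (lt_of_le_of_lt this hfjk)))
  exact absurd h1 (not_lt.mpr (le_of_lt (decodeFun_lt_decodeFun hj hk hjk)))

end WithHyp

/-- the running maximum of a permutation. -/
def encodeFun (π : Equiv.Perm (Fin n)) : Fin n → Fin n := fun i =>
  (Finset.Iic i).sup' Finset.nonempty_Iic ⇑π

theorem le_encodeFun (π : Equiv.Perm (Fin n)) {j i : Fin n} (h : j ≤ i) :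
    π j ≤ encodeFun π i :=
  Finset.le_sup' _ (Finset.mem_Iic.mpr h)

theorem encodeFun_mono (π : Equiv.Perm (Fin n)) : Monotone (encodeFun π) := by
  intro i i' h
  exact Finset.sup'_mono ⇑π (Finset.Iic_subset_Iic.mpr h) Finset.nonempty_Iic

theorem encodeFun_attained (π : Equiv.Perm (Fin n)) (i : Fin n) :
    ∃ k ≤ i, encodeFun π i = π k := by
  obtain ⟨k, hk, hv⟩ := Finset.exists_mem_eq_sup' (Finset.nonempty_Iic (a := i)) ⇑π
  exact ⟨k, Finset.mem_Iic.mp hk, hv⟩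

theorem encodeFun_diag (π : Equiv.Perm (Fin n)) (i : Fin n) :
    (i : ℕ) ≤ (encodeFun π i : ℕ) := by
  have himg : (Finset.Iic i).image ⇑π ⊆ Finset.Iic (encodeFun π i) := by
    intro x hx
    rw [Finset.mem_image] at hx
    obtain ⟨l, hl, rfl⟩ := hx
    exact Finset.mem_Iic.mpr (le_encodeFun π (Finset.mem_Iic.mp hl))
  have := Finset.card_le_card himg
  rw [Finset.card_image_of_injective _ π.injective, Fin.card_Iic, Fin.card_Iic] at this
  omega

theorem mem_jumps_encode {π : Equiv.Perm (Fin n)} {i : Fin n} :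
    i ∈ jumps (encodeFun π) ↔ π i = encodeFun π i := by
  constructor
  · intro h
    obtain ⟨k, hk, hv⟩ := encodeFun_attained π i
    rcases lt_or_eq_of_le hk with hlt | rfl
    · exfalso
      have h1 : encodeFun π i ≤ encodeFun π k := hv ▸ le_encodeFun π le_rfl
      exact absurd (mem_jumps.mp h k hlt) (not_lt.mpr h1)
    · exact hv.symm
  · intro h
    rw [mem_jumps]
    intro j hj
    rcases lt_or_eq_of_le (encodeFun_mono π (le_of_lt hj)) with hlt | heq
    · exact hlt
    · exfalso
      obtain ⟨k, hk, hv⟩ := encodeFun_attained π j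
      have : π k = π i := by rw [← hv, heq, ← h]
      have : k = i := π.injective this
      subst this
      exact absurd (lt_of_le_of_lt hk hj) (lt_irrefl k)

theorem encode_decode {f : Fin n → Fin n} (hmono : Monotone f)
    (hdiag : ∀ i : Fin n, (i : ℕ) ≤ (f i : ℕ)) (i : Fin n) :
    encodeFun (decodePerm f) i = f i := by
  apply le_antisymm
  · apply Finset.sup'_le
    intro k hk
    exact le_trans (decodeFun_le hmono hdiag k) (hmono (Finset.mem_Iic.mp hk))
  · obtain ⟨j, hji, hjj, hjv⟩ := exists_jump hmono i
    calc f i = decodeFun f j := by rw [decodeFun_jump hjj, hjv]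
    _ ≤ encodeFun (decodePerm f) i := le_encodeFun (decodePerm f) hji

theorem decode_encode {π : Equiv.Perm (Fin n)}
    (hA : ¬ ∃ i j k : Fin n, i < j ∧ j < k ∧ π k < π j ∧ π j < π i) (i : Fin n) :
    decodeFun (encodeFun π) i = π i := by
  set m := encodeFun π with hm
  -- strict inequality at non-jumps
  have hstrict : ∀ l : Fin n, l ∉ jumps m → π l < m l := by
    intro l hl
    rcases lt_or_eq_of_le (le_encodeFun π (le_rfl (a := l))) with h | h
    · exact h
    · exact absurd (mem_jumps_encode.mpr h) hl
  -- non-jump values are in cvals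
  have hR2 : ∀ l : Fin n, l ∉ jumps m → π l ∈ cvals m := by
    intro l hl
    rw [cvals, Finset.mem_compl]
    intro hmem
    rw [Finset.mem_image] at hmem
    obtain ⟨j, hj, hv⟩ := hmem
    have : π j = π l := by rw [← hv, mem_jumps_encode.mp hj]
    have : j = l := π.injective this
    subst this
    exact hl hj
  -- π is strictly increasing on non-jumps
  have hR3 : ∀ l l' : Fin n, l ∉ jumps m → l' ∉ jumps m → l < l' → π l < π l' := by
    intro l l' hl hl' hll'
    by_contra hc
    push_neg at hc
    have hne : π l' ≠ π l := fun h => absurd (π.injective h) (ne_of_gt hll')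
    have hlt : π l' < π l := lt_of_le_of_ne hc hne
    -- find an earlier position with a bigger value
    rw [mem_jumps] at hl
    push_neg at hl
    obtain ⟨j, hjl, hj⟩ := hl
    have hjeq : m j = m l := le_antisymm (encodeFun_mono π (le_of_lt hjl)) hj
    obtain ⟨k, hkj, hkv⟩ := encodeFun_attained π j
    have hklt : π l < π k := by
      rw [← hkv, ← hm, hjeq]
      exact hstrict l (by rw [mem_jumps]; push_neg; exact ⟨j, hjl, hj⟩)
    exact hA ⟨k, l, l', lt_of_le_of_lt hkj hjl, hll', hlt, hklt⟩
  by_cases h : i ∈ jumps m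
  · rw [decodeFun_jump h, hm, ← mem_jumps_encode.mp h]
  · rw [decodeFun_nonjump h]
    have hF : (fun l : Fin (((jumps m)ᶜ).card) => π (((jumps m)ᶜ).orderEmbOfFin rfl l))
        = ⇑((cvals m).orderEmbOfFin (card_cvals m)) := by
      apply Finset.orderEmbOfFin_unique
      · intro x
        apply hR2
        have := Finset.orderEmbOfFin_mem ((jumps m)ᶜ) rfl x
        rwa [Finset.mem_compl] at this
      · intro x y hxy
        apply hR3
        · have := Finset.orderEmbOfFin_mem ((jumps m)ᶜ) rfl x
          rwa [Finset.mem_compl] at this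
        · have := Finset.orderEmbOfFin_mem ((jumps m)ᶜ) rfl y
          rwa [Finset.mem_compl] at this
        · exact (((jumps m)ᶜ).orderEmbOfFin rfl).strictMono hxy
    have hi : (((jumps m)ᶜ).orderEmbOfFin rfl)
        ((((jumps m)ᶜ).orderIsoOfFin rfl).symm ⟨i, by simpa using h⟩) = i := by
      rw [← Finset.coe_orderIsoOfFin_apply, OrderIso.apply_symm_apply]
    rw [← hF]
    exact congrArg π hi



/-- The fundamental bijection: 321-avoiding permutations correspond to monotone
staircase functions via the running maximum. -/
noncomputable def avoidEquiv : {π : Equiv.Perm (Fin n) // Avoids321 π} ≃ Stair n where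
  toFun := fun p => ⟨encodeFun p.1, encodeFun_mono p.1, encodeFun_diag p.1⟩
  invFun := fun m => ⟨decodePerm m.1, decodePerm_avoids m.2.1 m.2.2⟩
  left_inv := fun p => Subtype.ext (Equiv.ext fun i => decode_encode p.2 i)
  right_inv := fun m => Subtype.ext (funext fun i => encode_decode m.2.1 m.2.2 i)

end Av321

theorem card_avoids321_eq_catalan (n : ℕ) :
    Nat.card {π : Equiv.Perm (Fin n) // Avoids321 π} =
      (2 * n).choose n / (n + 1) := by
  rw [Nat.card_congr (Av321.avoidEquiv (n := n)), Av321.stair_card,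
    catalan_eq_centralBinom_div]
  rfl
end
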